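/- The paraparticle realization map preserves anticommutators of odd elements: for all complex matrices B, B' ∈ M_{m×n}(ℂ) and C, C' ∈ M_{n×m}(ℂ), one has {J₁(B,C), J₁(B',C')} = J₀(BC' + B'C, CB' + C'B) in the algebra 𝒜. -/
import Mathlib


/-- The commutator `[x, y] = x*y - y*x`. -/
def pbComm {A : Type*} [Ring A] (x y : A) : A := x * y - y * x

/-- The anticommutator `{x, y} = x*y + y*x`. -/
def pbAComm {A : Type*} [Ring A] (x y : A) : A := x * y + y * x

/-- Kronecker delta with values in `ℂ`. -/
def kd {I : Type*} [DecidableEq I] (i j : I) : ℂ := if i = j then 1 else 0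

/-- A sign, i.e. `+1` or `-1`, regarded as an integer. -/
def IsSign (x : ℤ) : Prop := x = 1 ∨ x = -1

/-- The defining trilinear relations of the relative parabose set `P_BF`,
for a family `b` of parabosonic and `f` of parafermionic generators. -/
structure PBFRelations {A : Type*} [Ring A] [Algebra ℂ A]
    {I J : Type*} [DecidableEq I] [DecidableEq J]
    (b : I → ℤ → A) (f : J → ℤ → A) : Prop where
  rel_bbb : ∀ (i j k : I) (ξ η ε : ℤ), IsSign ξ → IsSign η → IsSign ε →
    pbComm (pbAComm (b i ξ) (b j η)) (b k ε)
      = (((ε - η : ℤ) : ℂ) * kd j k) • b i ξ + (((ε - ξ : ℤ) : ℂ) * kd i k) • b j η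
  rel_fff : ∀ (α β γ : J) (ξ η ε : ℤ), IsSign ξ → IsSign η → IsSign ε →
    pbComm (pbComm (f α ξ) (f β η)) (f γ ε)
      = ((((ε - η) ^ 2 : ℤ) : ℂ) / 2 * kd β γ) • f α ξ
        - ((((ε - ξ) ^ 2 : ℤ) : ℂ) / 2 * kd α γ) • f β η
  rel_bbf : ∀ (i j : I) (α : J) (ξ η ε : ℤ), IsSign ξ → IsSign η → IsSign ε →
    pbComm (pbAComm (b i ξ) (b j η)) (f α ε) = 0
  rel_ffb : ∀ (α β : J) (i : I) (ξ η ε : ℤ), IsSign ξ → IsSign η → IsSign ε →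
    pbComm (pbComm (f α ξ) (f β η)) (b i ε) = 0
  rel_fbb : ∀ (α : J) (i j : I) (ξ η ε : ℤ), IsSign ξ → IsSign η → IsSign ε →
    pbComm (pbAComm (f α ξ) (b i η)) (b j ε) = (((ε - η : ℤ) : ℂ) * kd i j) • f α ξ
  rel_bff : ∀ (i : I) (α β : J) (ξ η ε : ℤ), IsSign ξ → IsSign η → IsSign ε →
    pbAComm (pbAComm (b i ξ) (f α η)) (f β ε) = ((((ε - η) ^ 2 : ℤ) : ℂ) / 2 * kd α β) • b i ξ


set_option linter.unusedSectionVars false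






section helpers
variable {A : Type*} [Ring A] [Algebra ℂ A]

lemma pbAComm_comm (x y : A) : pbAComm x y = pbAComm y x := by
  simp [pbAComm, add_comm]

lemma pbAComm_smul_left (c : ℂ) (x y : A) : pbAComm (c • x) y = c • pbAComm x y := by
  simp [pbAComm, smul_add, smul_mul_assoc, mul_smul_comm]

lemma pbAComm_smul_right (c : ℂ) (x y : A) : pbAComm x (c • y) = c • pbAComm x y := by
  simp [pbAComm, smul_add, smul_mul_assoc, mul_smul_comm]

lemma pbComm_smul_left (c : ℂ) (x y : A) : pbComm (c • x) y = c • pbComm x y := by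
  simp [pbComm, smul_sub, smul_mul_assoc, mul_smul_comm]

lemma pbComm_zero_left (y : A) : pbComm (0 : A) y = 0 := by simp [pbComm]
lemma pbAComm_zero_left (y : A) : pbAComm (0 : A) y = 0 := by simp [pbAComm]

lemma pbComm_antisymm (x y : A) : pbComm x y = -pbComm y x := by simp [pbComm]

lemma pbAComm_add_left (x x' y : A) : pbAComm (x + x') y = pbAComm x y + pbAComm x' y := by
  simp [pbAComm]; noncomm_ring

lemma pbAComm_add_right (x y y' : A) : pbAComm x (y + y') = pbAComm x y + pbAComm x y' := by
  simp [pbAComm]; noncomm_ring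

lemma pbAComm_sum_left {ι : Type*} (s : Finset ι) (g : ι → A) (y : A) :
    pbAComm (∑ i ∈ s, g i) y = ∑ i ∈ s, pbAComm (g i) y := by
  simp [pbAComm, Finset.sum_mul, Finset.mul_sum, Finset.sum_add_distrib]

lemma pbAComm_sum_right {ι : Type*} (s : Finset ι) (x : A) (g : ι → A) :
    pbAComm x (∑ i ∈ s, g i) = ∑ i ∈ s, pbAComm x (g i) := by
  simp [pbAComm, Finset.sum_mul, Finset.mul_sum, Finset.sum_add_distrib]

lemma jacobi (x y z : A) :
    pbAComm x (pbAComm y z) = pbAComm (pbAComm x y) z + pbComm (pbComm x z) y := by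
  simp only [pbAComm, pbComm]; noncomm_ring

end helpers

set_option linter.unusedSectionVars false

section keylemmas
variable {A : Type*} [Ring A] [Algebra ℂ A] {I J : Type*} [DecidableEq I] [DecidableEq J]
  {b : I → ℤ → A} {f : J → ℤ → A} (h : PBFRelations b f)

include h

omit h in lemma sgn1 : IsSign 1 := Or.inl rfl
omit h in lemma sgn2 : IsSign (-1) := Or.inr rfl

-- L lemmas
lemma L1 (k l : I) (α : J) : pbComm (pbAComm (b k 1) (f α (-1))) (b l 1) = 0 := by
  rw [pbAComm_comm]
  have := h.rel_fbb α k l (-1) 1 1 sgn2 sgn1 sgn1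
  simpa using this

lemma L2 (k l : I) (α : J) :
    pbComm (pbAComm (b k 1) (f α (-1))) (b l (-1)) = ((-2 : ℂ) * kd k l) • f α (-1) := by
  rw [pbAComm_comm]
  have := h.rel_fbb α k l (-1) 1 (-1) sgn2 sgn1 sgn2
  rw [this]; norm_num

lemma L3 (k : I) (α β : J) : pbAComm (pbAComm (b k 1) (f α (-1))) (f β (-1)) = 0 := by
  have := h.rel_bff k α β 1 (-1) (-1) sgn1 sgn2 sgn2
  simpa using this

lemma L4 (k : I) (α β : J) :
    pbAComm (pbAComm (b k 1) (f α (-1))) (f β 1) = ((2 : ℂ) * kd α β) • b k 1 := by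
  have := h.rel_bff k α β 1 (-1) 1 sgn1 sgn2 sgn1
  rw [this]; norm_num

lemma L5 (k l : I) (α : J) :
    pbComm (pbAComm (f α 1) (b k (-1))) (b l 1) = ((2 : ℂ) * kd k l) • f α 1 := by
  have := h.rel_fbb α k l 1 (-1) 1 sgn1 sgn2 sgn1
  rw [this]; norm_num

lemma L6 (k l : I) (α : J) : pbComm (pbAComm (f α 1) (b k (-1))) (b l (-1)) = 0 := by
  have := h.rel_fbb α k l 1 (-1) (-1) sgn1 sgn2 sgn2
  simpa using this

lemma L7 (k : I) (α β : J) :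
    pbAComm (pbAComm (f α 1) (b k (-1))) (f β (-1)) = ((2 : ℂ) * kd α β) • b k (-1) := by
  rw [pbAComm_comm (f α 1)]
  have := h.rel_bff k α β (-1) 1 (-1) sgn2 sgn1 sgn2
  rw [this]; norm_num

lemma L8 (k : I) (α β : J) : pbAComm (pbAComm (f α 1) (b k (-1))) (f β 1) = 0 := by
  rw [pbAComm_comm (f α 1)]
  have := h.rel_bff k α β (-1) 1 1 sgn2 sgn1 sgn1
  simpa using this

-- K lemmas
lemma KXX (k l : I) (α β : J) :
    pbAComm (pbAComm (b k 1) (f α (-1))) (pbAComm (b l 1) (f β (-1))) = 0 := by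
  rw [pbAComm_comm (b l 1), jacobi, L3 h, L1 h, pbAComm_zero_left, pbComm_zero_left, add_zero]

lemma KYY (k l : I) (α β : J) :
    pbAComm (pbAComm (f α 1) (b k (-1))) (pbAComm (f β 1) (b l (-1))) = 0 := by
  rw [jacobi, L8 h, L6 h, pbAComm_zero_left, pbComm_zero_left, add_zero]

lemma KXY (k l : I) (α β : J) :
    pbAComm (pbAComm (b k 1) (f α (-1))) (pbAComm (f β 1) (b l (-1)))
      = ((2 : ℂ) * kd α β) • pbAComm (b k 1) (b l (-1))
        + ((2 : ℂ) * kd k l) • pbComm (f β 1) (f α (-1)) := by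
  rw [jacobi, L4 h, L2 h, pbAComm_smul_left, pbComm_smul_left]
  rw [pbComm_antisymm (f α (-1))]
  congr 1
  rw [smul_neg]
  rw [show ((-2 : ℂ) * kd k l) = -((2:ℂ) * kd k l) by ring, neg_smul, neg_neg]

lemma KYX (k l : I) (α β : J) :
    pbAComm (pbAComm (f α 1) (b k (-1))) (pbAComm (b l 1) (f β (-1)))
      = ((2 : ℂ) * kd α β) • pbAComm (b l 1) (b k (-1))
        + ((2 : ℂ) * kd k l) • pbComm (f α 1) (f β (-1)) := by
  rw [pbAComm_comm (b l 1), jacobi, L7 h, L5 h, pbAComm_smul_left, pbComm_smul_left,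
    pbAComm_comm (b k (-1))]

end keylemmas


section sums
variable {M : Type*} [AddCommMonoid M] {i1 i2 i3 : Type*} [Fintype i1] [Fintype i2] [Fintype i3]

lemma sum3_swap23 (g : i1 → i2 → i3 → M) :
    ∑ a, ∑ b, ∑ c, g a b c = ∑ a, ∑ c, ∑ b, g a b c :=
  Finset.sum_congr rfl fun _ _ => Finset.sum_comm

lemma sum3_cycle (g : i1 → i2 → i3 → M) :
    ∑ a, ∑ b, ∑ c, g a b c = ∑ c, ∑ a, ∑ b, g a b c := by
  rw [sum3_swap23]; exact Finset.sum_comm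

lemma sum3_cycle' (g : i1 → i2 → i3 → M) :
    ∑ a, ∑ b, ∑ c, g a b c = ∑ b, ∑ c, ∑ a, g a b c := by
  rw [Finset.sum_comm]; exact sum3_swap23 _

lemma sum3_rev (g : i1 → i2 → i3 → M) :
    ∑ a, ∑ b, ∑ c, g a b c = ∑ c, ∑ b, ∑ a, g a b c := by
  rw [sum3_cycle]; exact Finset.sum_congr rfl fun _ _ => Finset.sum_comm

end sums

open scoped BigOperators

/-- The even part of the paraparticle realization map:
`J₀(A,D) = ½ Σ A_{kl} {b_k^+, b_l^-} + ½ Σ D_{αβ} [f_α^+, f_β^-]`. -/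
noncomputable def J0 {𝒜 : Type*} [Ring 𝒜] [Algebra ℂ 𝒜] {m n : ℕ}
    (b : Fin m → ℤ → 𝒜) (f : Fin n → ℤ → 𝒜)
    (A : Matrix (Fin m) (Fin m) ℂ) (D : Matrix (Fin n) (Fin n) ℂ) : 𝒜 :=
  (1 / 2 : ℂ) • (∑ k, ∑ l, A k l • pbAComm (b k 1) (b l (-1)))
    + (1 / 2 : ℂ) • (∑ α, ∑ β, D α β • pbComm (f α 1) (f β (-1)))

/-- The odd part of the paraparticle realization map:
`J₁(B,C) = ½ Σ ( B_{kα} {b_k^+, f_α^-} + C_{αk} {f_α^+, b_k^-} )`. -/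
noncomputable def J1 {𝒜 : Type*} [Ring 𝒜] [Algebra ℂ 𝒜] {m n : ℕ}
    (b : Fin m → ℤ → 𝒜) (f : Fin n → ℤ → 𝒜)
    (B : Matrix (Fin m) (Fin n) ℂ) (C : Matrix (Fin n) (Fin m) ℂ) : 𝒜 :=
  (1 / 2 : ℂ) • (∑ k, ∑ α, (B k α • pbAComm (b k 1) (f α (-1)) + C α k • pbAComm (f α 1) (b k (-1))))

/-- The paraparticle realization map preserves anticommutators of odd elements. -/
theorem J1_acomm_J1 {𝒜 : Type*} [Ring 𝒜] [Algebra ℂ 𝒜] {m n : ℕ}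
    (hm : 0 < m) (hn : 0 < n)
    (b : Fin m → ℤ → 𝒜) (f : Fin n → ℤ → 𝒜) (h : PBFRelations b f)
    (B B' : Matrix (Fin m) (Fin n) ℂ) (C C' : Matrix (Fin n) (Fin m) ℂ) :
    pbAComm (J1 b f B C) (J1 b f B' C') = J0 b f (B * C' + B' * C) (C * B' + C' * B) := by
  unfold J1 J0
  simp only [pbAComm_smul_left, pbAComm_smul_right, pbAComm_sum_left, pbAComm_sum_right,
    pbAComm_add_left, pbAComm_add_right, KXX h, KXY h, KYX h, KYY h,
    smul_zero, zero_add, add_zero, smul_add, smul_smul, Finset.smul_sum]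
  simp only [kd, mul_ite, ite_mul, mul_zero, mul_one, zero_mul, ite_smul, zero_smul,
    Finset.sum_ite_irrel, Finset.sum_const_zero, Finset.sum_ite_eq, Finset.sum_ite_eq',
    Finset.mem_univ, if_true, Matrix.add_apply, Matrix.mul_apply, add_smul, Finset.sum_smul,
    mul_assoc, mul_add, Finset.mul_sum, Finset.sum_add_distrib]
  have h1 : (∑ x : Fin m, ∑ x_1 : Fin n, ∑ x_2 : Fin m,
        (1 / 2 * (B' x x_1 * (1 / 2 * (C x_1 x_2 * 2)))) • pbAComm (b x 1) (b x_2 (-1)))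
      = ∑ x : Fin m, ∑ x_1 : Fin m, ∑ i : Fin n,
        (1 / 2 * (B' x i * C i x_1)) • pbAComm (b x 1) (b x_1 (-1)) := by
    refine (sum3_swap23 _).trans ?_
    exact Finset.sum_congr rfl fun a _ => Finset.sum_congr rfl fun c _ =>
      Finset.sum_congr rfl fun e _ => by congr 1; ring
  have h2 : (∑ x : Fin m, ∑ x_1 : Fin n, ∑ x_2 : Fin n,
        (1 / 2 * (B' x x_1 * (1 / 2 * (C x_2 x * 2)))) • pbComm (f x_2 1) (f x_1 (-1)))
      = ∑ x : Fin n, ∑ x_1 : Fin n, ∑ i : Fin m,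
        (1 / 2 * (C x i * B' i x_1)) • pbComm (f x 1) (f x_1 (-1)) := by
    refine (sum3_rev _).trans ?_
    exact Finset.sum_congr rfl fun a _ => Finset.sum_congr rfl fun c _ =>
      Finset.sum_congr rfl fun e _ => by congr 1; ring
  have h3 : (∑ x : Fin m, ∑ x_1 : Fin n, ∑ x_2 : Fin m,
        (1 / 2 * (C' x_1 x * (1 / 2 * (B x_2 x_1 * 2)))) • pbAComm (b x_2 1) (b x (-1)))
      = ∑ x : Fin m, ∑ x_1 : Fin m, ∑ i : Fin n,
        (1 / 2 * (B x i * C' i x_1)) • pbAComm (b x 1) (b x_1 (-1)) := by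
    refine (sum3_cycle _).trans ?_
    exact Finset.sum_congr rfl fun a _ => Finset.sum_congr rfl fun c _ =>
      Finset.sum_congr rfl fun e _ => by congr 1; ring
  have h4 : (∑ x : Fin m, ∑ x_1 : Fin n, ∑ x_2 : Fin n,
        (1 / 2 * (C' x_1 x * (1 / 2 * (B x x_2 * 2)))) • pbComm (f x_1 1) (f x_2 (-1)))
      = ∑ x : Fin n, ∑ x_1 : Fin n, ∑ i : Fin m,
        (1 / 2 * (C' x i * B i x_1)) • pbComm (f x 1) (f x_1 (-1)) := by
    refine (sum3_cycle' _).trans ?_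
    exact Finset.sum_congr rfl fun a _ => Finset.sum_congr rfl fun c _ =>
      Finset.sum_congr rfl fun e _ => by congr 1; ring
  rw [h1, h2, h3, h4]
  abel
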